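/- The dual objective G(p) = Σ_j N^S_j·Π^S_j(p) + Σ_{(t,w)} N^D_{(t,w)}·Π^D_{(t,w)}(p), where each Π^S_j(p) = -(1/θ)ln Σ_{t∈T̃} exp(-θ(C^S_{j,t} + p_{(t,j)})) (with p_{(0,j)} := 0) and each Π^D is a logit expected minimum with additive costs of the form C - Σ_j δ_{r,j} p_{(t,j)}, is a concave and differentiable function of the price vector p, and its gradient with respect to p_{(t,j)} equals the excess demand y*_{j,t}(p) - Σ_{w} Σ_r δ_{r,j} f*_{(t,w),r}(p), where y* and f* are the corresponding logit demand functions. -/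

import Mathlib

section

variable {J Tt W Rb : Type*} [Fintype J] [Fintype Tt] [Fintype W] [Fintype Rb]

/-- Logit shipper surplus `Π^S_j(p)` (opt-out cost `CS0 j`, price 0). -/
noncomputable def PiS (θ : ℝ) (CS0 : J → ℝ) (CS : J → Tt → ℝ) (j : J)
    (p : Tt × J → ℝ) : ℝ :=
  -(1 / θ) * Real.log (Real.exp (-θ * CS0 j) +
    ∑ t, Real.exp (-θ * (CS j t + p (t, j))))

/-- Logit driver surplus `Π^D_{(t,w)}(p)` with additive bundle rewards. -/
noncomputable def PiD (φ : ℝ) (CD0 : Tt → W → ℝ) (CD : Tt → W → Rb → ℝ)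
    (δ : Rb → J → ℕ) (t : Tt) (w : W) (p : Tt × J → ℝ) : ℝ :=
  -(1 / φ) * Real.log (Real.exp (-φ * CD0 t w) +
    ∑ r, Real.exp (-φ * (CD t w r - ∑ j, (δ r j : ℝ) * p (t, j))))

/-- Dual objective `G(p) = Σ_j N^S_j Π^S_j(p) + Σ_{(t,w)} N^D_{(t,w)} Π^D_{(t,w)}(p)`. -/
noncomputable def dualG (θ φ : ℝ) (NS : J → ℝ) (ND : Tt → W → ℝ)
    (CS0 : J → ℝ) (CS : J → Tt → ℝ) (CD0 : Tt → W → ℝ) (CD : Tt → W → Rb → ℝ)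
    (δ : Rb → J → ℕ) (p : Tt × J → ℝ) : ℝ :=
  (∑ j, NS j * PiS θ CS0 CS j p) + ∑ t, ∑ w, ND t w * PiD φ CD0 CD δ t w p

/-- Logit shipper demand `y*_{j,t}(p)`. -/
noncomputable def ystar (θ : ℝ) (NS : J → ℝ) (CS0 : J → ℝ) (CS : J → Tt → ℝ)
    (j : J) (t : Tt) (p : Tt × J → ℝ) : ℝ :=
  NS j * Real.exp (-θ * (CS j t + p (t, j) - PiS θ CS0 CS j p))

/-- Logit driver demand `f*_{(t,w),r}(p)`. -/
noncomputable def fstar (φ : ℝ) (ND : Tt → W → ℝ) (CD0 : Tt → W → ℝ)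
    (CD : Tt → W → Rb → ℝ) (δ : Rb → J → ℕ) (t : Tt) (w : W) (r : Rb)
    (p : Tt × J → ℝ) : ℝ :=
  ND t w * Real.exp (-φ * (CD t w r - (∑ j, (δ r j : ℝ) * p (t, j)) -
    PiD φ CD0 CD δ t w p))

/- ### Auxiliary lemmas -/

/-- Two-term Hölder inequality for finite sums. -/
lemma aux_holder_two {ι : Type*} [Fintype ι] (u v : ι → ℝ)
    (hu : ∀ i, 0 ≤ u i) (hv : ∀ i, 0 ≤ v i)
    {a b : ℝ} (ha : 0 < a) (hb : 0 < b) (hab : a + b = 1) :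
    ∑ i, u i ^ a * v i ^ b ≤ (∑ i, u i) ^ a * (∑ i, v i) ^ b := by
  have ha1 : a < 1 := by linarith
  have hpq : Real.HolderConjugate (1/a) (1/b) := by
    constructor
    · simp only [one_div, inv_inv, inv_one]; exact hab
    · positivity
    · positivity
  have H := Real.inner_le_Lp_mul_Lq_of_nonneg (Finset.univ : Finset ι) hpq
    (f := fun i => u i ^ a) (g := fun i => v i ^ b)
    (fun i _ => Real.rpow_nonneg (hu i) a) (fun i _ => Real.rpow_nonneg (hv i) b)
  calc ∑ i, u i ^ a * v i ^ b ≤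
      (∑ i, (u i ^ a) ^ (1/a)) ^ (1/(1/a)) * (∑ i, (v i ^ b) ^ (1/b)) ^ (1/(1/b)) := H
    _ = (∑ i, u i) ^ a * (∑ i, v i) ^ b := by
        rw [one_div_one_div, one_div_one_div]
        congr 2 <;> apply Finset.sum_congr rfl <;> intro i _
        · rw [← Real.rpow_mul (hu i), mul_one_div_cancel ha.ne', Real.rpow_one]
        · rw [← Real.rpow_mul (hv i), mul_one_div_cancel hb.ne', Real.rpow_one]

/-- Log-sum-exp of affine functions is convex. -/
lemma aux_convexOn_log_sum_exp {E : Type*} [AddCommGroup E] [Module ℝ E]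
    {ι : Type*} [Fintype ι] [Nonempty ι] (g : ι → E → ℝ)
    (hg : ∀ i (x y : E) (a b : ℝ), 0 ≤ a → 0 ≤ b → a + b = 1 →
      g i (a • x + b • y) = a * g i x + b * g i y) :
    ConvexOn ℝ Set.univ (fun x => Real.log (∑ i, Real.exp (g i x))) := by
  refine ⟨convex_univ, fun x _ y _ a b ha hb hab => ?_⟩
  rcases eq_or_lt_of_le ha with rfl | ha'
  · simp only [zero_add] at hab; subst hab
    have h0 : ∀ i, g i ((0:ℝ) • x + (1:ℝ) • y) = g i y := by
      intro i; rw [hg i x y 0 1 le_rfl zero_le_one (by ring)]; ring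
    simp [h0]
  rcases eq_or_lt_of_le hb with rfl | hb'
  · simp only [add_zero] at hab; subst hab
    have h0 : ∀ i, g i ((1:ℝ) • x + (0:ℝ) • y) = g i x := by
      intro i; rw [hg i x y 1 0 zero_le_one le_rfl (by ring)]; ring
    simp [h0]
  have hsum : ∀ z : E, 0 < ∑ i, Real.exp (g i z) := fun z =>
    Finset.sum_pos (fun i _ => Real.exp_pos _) Finset.univ_nonempty
  have key : ∑ i, Real.exp (g i (a • x + b • y)) ≤
      (∑ i, Real.exp (g i x)) ^ a * (∑ i, Real.exp (g i y)) ^ b := by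
    have h1 : ∀ i, Real.exp (g i (a • x + b • y)) =
        Real.exp (g i x) ^ a * Real.exp (g i y) ^ b := by
      intro i
      rw [hg i x y a b ha hb hab, Real.exp_add, mul_comm a, mul_comm b,
        Real.exp_mul, Real.exp_mul]
    rw [Finset.sum_congr rfl fun i _ => h1 i]
    exact aux_holder_two _ _ (fun i => (Real.exp_pos _).le) (fun i => (Real.exp_pos _).le)
      ha' hb' hab
  simp only [smul_eq_mul]
  calc Real.log (∑ i, Real.exp (g i (a • x + b • y)))
      ≤ Real.log ((∑ i, Real.exp (g i x)) ^ a * (∑ i, Real.exp (g i y)) ^ b) :=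
        Real.log_le_log (hsum _) key
    _ = a * Real.log (∑ i, Real.exp (g i x)) + b * Real.log (∑ i, Real.exp (g i y)) := by
        rw [Real.log_mul (by positivity) (by positivity), Real.log_rpow (hsum x),
          Real.log_rpow (hsum y)]

/-- Finite sums of concave functions are concave. -/
lemma aux_concaveOn_finset_sum {E : Type*} [AddCommGroup E] [Module ℝ E] {ι : Type*}
    (s : Finset ι) {f : ι → E → ℝ} (h : ∀ i ∈ s, ConcaveOn ℝ Set.univ (f i)) :
    ConcaveOn ℝ Set.univ fun x => ∑ i ∈ s, f i x := by
  induction s using Finset.cons_induction with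
  | empty => simpa using concaveOn_const (0:ℝ) convex_univ
  | cons i s hi ih =>
    simp only [Finset.sum_cons]
    exact (h i (Finset.mem_cons_self i s)).add (ih fun j hj => h j (Finset.mem_cons_of_mem hj))

/-- Derivative of the generic 1-D logit block. -/
lemma aux_hasDerivAt_logit_block {ι : Type*} [Fintype ι] {c : ℝ} (hc : c ≠ 0)
    {e0 : ℝ} (he0 : 0 < e0) (b k : ι → ℝ) (z : ℝ) :
    HasDerivAt (fun z => -(1/c) * Real.log (e0 + ∑ i, Real.exp (-c * (b i + k i * z))))
      ((∑ i, k i * Real.exp (-c * (b i + k i * z))) /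
        (e0 + ∑ i, Real.exp (-c * (b i + k i * z)))) z := by
  have hterm : ∀ i : ι, HasDerivAt (fun z => Real.exp (-c * (b i + k i * z)))
      (Real.exp (-c * (b i + k i * z)) * (-c * k i)) z := by
    intro i
    have h1 : HasDerivAt (fun z => -c * (b i + k i * z)) (-c * k i) z := by
      have h0 := (((hasDerivAt_id z).const_mul (k i)).const_add (b i)).const_mul (-c)
      simpa [mul_comm] using h0
    simpa using h1.exp
  have hsum := (HasDerivAt.fun_sum (fun i (_ : i ∈ Finset.univ) => hterm i)).const_add e0
  have hpos : (0:ℝ) < e0 + ∑ i, Real.exp (-c * (b i + k i * z)) := by positivity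
  have hlog := hsum.log hpos.ne'
  have hfin := hlog.const_mul (-(1/c))
  refine hfin.congr_deriv (Eq.symm ?_)
  have hnum : ∑ i, Real.exp (-c*(b i + k i*z)) * (-c * k i)
      = -c * ∑ i, k i * Real.exp (-c*(b i + k i * z)) := by
    rw [Finset.mul_sum]; exact Finset.sum_congr rfl fun i _ => by ring
  rw [hnum]
  field_simp
  exact Finset.sum_congr rfl fun i _ => by ring_nf

/-- The dual objective `G` is concave and differentiable in the price vector
`p`, and its partial derivative with respect to `p (t,j)` equals the excess
demand `y*_{j,t}(p) - Σ_w Σ_r δ_{r,j} f*_{(t,w),r}(p)`. -/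
theorem dualG_concave_differentiable_gradient
    [DecidableEq Tt] [DecidableEq J]
    (θ φ : ℝ) (hθ : 0 < θ) (hφ : 0 < φ)
    (NS : J → ℝ) (hNS : ∀ j, 0 < NS j)
    (ND : Tt → W → ℝ) (hND : ∀ t w, 0 < ND t w)
    (CS0 : J → ℝ) (CS : J → Tt → ℝ) (CD0 : Tt → W → ℝ)
    (CD : Tt → W → Rb → ℝ) (δ : Rb → J → ℕ) :
    ConcaveOn ℝ Set.univ (dualG θ φ NS ND CS0 CS CD0 CD δ) ∧
    Differentiable ℝ (dualG θ φ NS ND CS0 CS CD0 CD δ) ∧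
    (∀ (p : Tt × J → ℝ) (t : Tt) (j : J),
      HasDerivAt
        (fun z : ℝ => dualG θ φ NS ND CS0 CS CD0 CD δ
          (Function.update p (t, j) z))
        (ystar θ NS CS0 CS j t p -
          ∑ w, ∑ r, (δ r j : ℝ) * fstar φ ND CD0 CD δ t w r p)
        (p (t, j))) := by
  classical
  have hSpos : ∀ (j : J) (p : Tt × J → ℝ),
      0 < Real.exp (-θ * CS0 j) + ∑ t', Real.exp (-θ * (CS j t' + p (t', j))) := by
    intro j p; positivity
  have hDpos : ∀ (t : Tt) (w : W) (p : Tt × J → ℝ),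
      0 < Real.exp (-φ * CD0 t w) +
        ∑ r, Real.exp (-φ * (CD t w r - ∑ j', (δ r j' : ℝ) * p (t, j'))) := by
    intro t w p; positivity
  refine ⟨?_, ?_, ?_⟩
  · -- Concavity
    have hPiS : ∀ j, ConcaveOn ℝ Set.univ (PiS θ CS0 CS j (Tt := Tt)) := by
      intro j
      have hc := aux_convexOn_log_sum_exp (E := Tt × J → ℝ) (ι := Option Tt)
        (fun o x => Option.elim o (-θ * CS0 j) fun t' => -θ * (CS j t' + x (t', j)))
        (by
          rintro (_ | t') x y a b ha hb hab
          · simp only [Option.elim]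
            linear_combination (θ * CS0 j) * hab
          · have hx : (a • x + b • y) (t', j) = a * x (t', j) + b * y (t', j) := rfl
            simp only [Option.elim, hx]
            linear_combination (θ * CS j t') * hab)
      have h2 := (hc.smul (le_of_lt (by positivity : (0:ℝ) < 1/θ))).neg
      refine (congrArg (ConcaveOn ℝ Set.univ) ?_).mpr h2
      funext q
      simp only [PiS, Pi.neg_apply, Pi.smul_apply, smul_eq_mul, Fintype.sum_option, Option.elim]
      ring
    have hPiD : ∀ t w, ConcaveOn ℝ Set.univ (PiD φ CD0 CD δ t w (J := J)) := by
      intro t w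
      have hc := aux_convexOn_log_sum_exp (E := Tt × J → ℝ) (ι := Option Rb)
        (fun o x => Option.elim o (-φ * CD0 t w)
          fun r => -φ * (CD t w r - ∑ j', (δ r j' : ℝ) * x (t, j')))
        (by
          rintro (_ | r) x y a b ha hb hab
          · simp only [Option.elim]
            linear_combination (φ * CD0 t w) * hab
          · have hx : ∑ j', (δ r j' : ℝ) * (a • x + b • y) (t, j')
                = a * ∑ j', (δ r j' : ℝ) * x (t, j') + b * ∑ j', (δ r j' : ℝ) * y (t, j') := by
              rw [Finset.mul_sum, Finset.mul_sum, ← Finset.sum_add_distrib]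
              exact Finset.sum_congr rfl fun j' _ => by
                have hxy : (a • x + b • y) (t, j') = a * x (t, j') + b * y (t, j') := rfl
                rw [hxy]; ring
            simp only [Option.elim, hx]
            linear_combination (φ * CD t w r) * hab)
      have h2 := (hc.smul (le_of_lt (by positivity : (0:ℝ) < 1/φ))).neg
      refine (congrArg (ConcaveOn ℝ Set.univ) ?_).mpr h2
      funext q
      simp only [PiD, Pi.neg_apply, Pi.smul_apply, smul_eq_mul, Fintype.sum_option, Option.elim]
      ring
    have h1 : ConcaveOn ℝ Set.univ fun p : Tt × J → ℝ => ∑ j, NS j * PiS θ CS0 CS j p :=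
      aux_concaveOn_finset_sum _ fun j _ => (hPiS j).smul (hNS j).le
    have h2 : ConcaveOn ℝ Set.univ
        fun p : Tt × J → ℝ => ∑ t, ∑ w, ND t w * PiD φ CD0 CD δ t w p :=
      aux_concaveOn_finset_sum _ fun t _ =>
        aux_concaveOn_finset_sum _ fun w _ => (hPiD t w).smul (hND t w).le
    exact h1.add h2
  · -- Differentiability
    have hproj : ∀ q : Tt × J, Differentiable ℝ fun p : Tt × J → ℝ => p q := fun q =>
      differentiable_pi.mp differentiable_id q
    have hdiffS : ∀ j, Differentiable ℝ (PiS θ CS0 CS j (Tt := Tt)) := by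
      intro j
      unfold PiS
      refine Differentiable.const_mul ?_ _
      refine Differentiable.log ?_ fun p => (hSpos j p).ne'
      refine Differentiable.const_add _ ?_
      exact Differentiable.fun_sum fun t' _ => (((hproj (t', j)).const_add (CS j t')).const_mul (-θ)).exp
    have hdiffD : ∀ t w, Differentiable ℝ (PiD φ CD0 CD δ t w (J := J)) := by
      intro t w
      unfold PiD
      refine Differentiable.const_mul ?_ _
      refine Differentiable.log ?_ fun p => (hDpos t w p).ne'
      refine Differentiable.const_add _ ?_
      refine Differentiable.fun_sum fun r _ => Differentiable.exp ?_
      refine Differentiable.const_mul ?_ _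
      exact Differentiable.const_sub (Differentiable.fun_sum fun j' _ => (hproj (t, j')).const_mul _) _
    exact Differentiable.add
      (Differentiable.fun_sum fun j _ => (hdiffS j).const_mul _)
      (Differentiable.fun_sum fun t _ => Differentiable.fun_sum fun w _ => (hdiffD t w).const_mul _)
  · -- Gradient
    intro p t j
    -- Part 1: shipper side
    have part1 : HasDerivAt
        (fun z => ∑ j', NS j' * PiS θ CS0 CS j' (Function.update p (t, j) z))
        (ystar θ NS CS0 CS j t p) (p (t, j)) := by
      have h := HasDerivAt.fun_sum (u := Finset.univ)
        (A := fun j' z => NS j' * PiS θ CS0 CS j' (Function.update p (t, j) z))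
        (A' := fun j' => if j' = j then ystar θ NS CS0 CS j t p else 0)
        (x := p (t, j)) ?_
      · simpa [Finset.sum_ite_eq'] using h
      intro j' _
      rcases eq_or_ne j' j with rfl | hne
      · simp only [if_pos rfl]
        have hblock := (aux_hasDerivAt_logit_block (ne_of_gt hθ) (Real.exp_pos (-θ * CS0 j'))
          (fun t' => CS j' t' + if t' = t then 0 else p (t', j'))
          (fun t' => if t' = t then (1:ℝ) else 0) (p (t, j'))).const_mul (NS j')
        have hupd : ∀ (z : ℝ) (t' : Tt),
            Function.update p (t, j') z (t', j') = if t' = t then z else p (t', j') := by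
          intro z t'
          rcases eq_or_ne t' t with rfl | h'
          · simp
          · rw [Function.update_of_ne (by simp [Prod.ext_iff, h']), if_neg h']
        have hfun : (fun z => NS j' * PiS θ CS0 CS j' (Function.update p (t, j') z))
            = fun z => NS j' * (-(1/θ) * Real.log (Real.exp (-θ * CS0 j') +
                ∑ t', Real.exp (-θ * ((CS j' t' + if t' = t then 0 else p (t', j')) +
                  (if t' = t then (1:ℝ) else 0) * z)))) := by
          funext z
          have harg : ∀ t', (CS j' t' + if t' = t then z else p (t', j'))
              = ((CS j' t' + if t' = t then 0 else p (t', j')) +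
                (if t' = t then (1:ℝ) else 0) * z) := by
            intro t'; split <;> ring
          simp only [PiS, hupd, harg]
        rw [hfun]
        refine hblock.congr_deriv (Eq.symm ?_)
        have hb : ∀ t', ((CS j' t' + if t' = t then 0 else p (t', j')) +
            (if t' = t then (1:ℝ) else 0) * p (t, j')) =
            CS j' t' + p (t', j') := by
          intro t'; rcases eq_or_ne t' t with rfl | h'
          · simp
          · simp [h']
        simp only [hb]
        have hnum : ∀ t', (if t' = t then (1:ℝ) else 0) * Real.exp (-θ * (CS j' t' + p (t', j')))
            = if t' = t then Real.exp (-θ * (CS j' t + p (t, j'))) else 0 := by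
          intro t'; rcases eq_or_ne t' t with rfl | h'
          · simp
          · simp [h']
        simp only [hnum, Finset.sum_ite_eq', Finset.mem_univ, if_true]
        simp only [ystar]
        rw [show -θ * (CS j' t + p (t, j') - PiS θ CS0 CS j' p)
            = -θ * (CS j' t + p (t, j')) + θ * PiS θ CS0 CS j' p from by ring, Real.exp_add]
        have hlogS : θ * PiS θ CS0 CS j' p = -Real.log (Real.exp (-θ * CS0 j') +
            ∑ t', Real.exp (-θ * (CS j' t' + p (t', j')))) := by
          simp only [PiS]; field_simp
        rw [hlogS, Real.exp_neg, Real.exp_log (hSpos j' p), div_eq_mul_inv]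
      · simp only [if_neg hne]
        have hconst : (fun z => NS j' * PiS θ CS0 CS j' (Function.update p (t, j) z))
            = fun _ => NS j' * PiS θ CS0 CS j' p := by
          funext z
          have hupd : ∀ t' : Tt, Function.update p (t, j) z (t', j') = p (t', j') := fun t' =>
            Function.update_of_ne (by simp [Prod.ext_iff, hne]) _ _
          simp only [PiS, hupd]
        rw [hconst]
        exact hasDerivAt_const _ _
    -- Part 2: driver side
    have part2 : HasDerivAt
        (fun z => ∑ t', ∑ w, ND t' w * PiD φ CD0 CD δ t' w (Function.update p (t, j) z))
        (-(∑ w, ∑ r, (δ r j : ℝ) * fstar φ ND CD0 CD δ t w r p)) (p (t, j)) := by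
      have h := HasDerivAt.fun_sum (u := Finset.univ)
        (A := fun t' z => ∑ w, ND t' w * PiD φ CD0 CD δ t' w (Function.update p (t, j) z))
        (A' := fun t' => if t' = t
          then -(∑ w, ∑ r, (δ r j : ℝ) * fstar φ ND CD0 CD δ t w r p) else 0)
        (x := p (t, j)) ?_
      · simpa [Finset.sum_ite_eq'] using h
      intro t' _
      rcases eq_or_ne t' t with rfl | ht'
      · simp only [if_pos rfl]
        have hw := HasDerivAt.fun_sum (u := Finset.univ)
          (A := fun w z => ND t' w * PiD φ CD0 CD δ t' w (Function.update p (t', j) z))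
          (A' := fun w => -(∑ r, (δ r j : ℝ) * fstar φ ND CD0 CD δ t' w r p))
          (x := p (t', j)) ?_
        · convert hw using 1
          exact (Finset.sum_neg_distrib _).symm
        intro w _
        show HasDerivAt (fun z => ND t' w * PiD φ CD0 CD δ t' w (Function.update p (t', j) z))
          (-(∑ r, (δ r j : ℝ) * fstar φ ND CD0 CD δ t' w r p)) (p (t', j))
        have hsum : ∀ (r : Rb) (z : ℝ),
            ∑ j', (δ r j' : ℝ) * Function.update p (t', j) z (t', j')
            = (∑ j', if j' = j then 0 else (δ r j' : ℝ) * p (t', j')) + (δ r j : ℝ) * z := by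
          intro r z
          have hterm : ∀ j', (δ r j' : ℝ) * Function.update p (t', j) z (t', j')
              = (if j' = j then 0 else (δ r j' : ℝ) * p (t', j')) +
                (if j' = j then (δ r j : ℝ) * z else 0) := by
            intro j'; rcases eq_or_ne j' j with rfl | h'
            · simp
            · rw [Function.update_of_ne (by simp [Prod.ext_iff, h'])]; simp [h']
          rw [Finset.sum_congr rfl fun j' _ => hterm j', Finset.sum_add_distrib,
            Finset.sum_ite_eq' Finset.univ j]
          simp
        have hblock := (aux_hasDerivAt_logit_block (ne_of_gt hφ) (Real.exp_pos (-φ * CD0 t' w))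
          (fun r => CD t' w r - ∑ j', if j' = j then 0 else (δ r j' : ℝ) * p (t', j'))
          (fun r => -(δ r j : ℝ)) (p (t', j))).const_mul (ND t' w)
        have hfun : (fun z => ND t' w * PiD φ CD0 CD δ t' w (Function.update p (t', j) z))
            = fun z => ND t' w * (-(1/φ) * Real.log (Real.exp (-φ * CD0 t' w) +
                ∑ r, Real.exp (-φ *
                  ((CD t' w r - ∑ j', if j' = j then 0 else (δ r j' : ℝ) * p (t', j')) +
                    (-(δ r j : ℝ)) * z)))) := by
          funext z
          have harg : ∀ r, (CD t' w r - ∑ j', (δ r j' : ℝ) * Function.update p (t', j) z (t', j'))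
              = ((CD t' w r - ∑ j', if j' = j then 0 else (δ r j' : ℝ) * p (t', j')) +
                  (-(δ r j : ℝ)) * z) := by
            intro r; rw [hsum r z]; ring
          simp only [PiD, harg]
        rw [hfun]
        refine hblock.congr_deriv (Eq.symm ?_)
        have hb : ∀ r, ((CD t' w r - ∑ j', if j' = j then 0 else (δ r j' : ℝ) * p (t', j')) +
            (-(δ r j : ℝ)) * p (t', j)) = CD t' w r - ∑ j', (δ r j' : ℝ) * p (t', j') := by
          intro r
          have h0 := hsum r (p (t', j))
          rw [Function.update_eq_self] at h0
          rw [h0]; ring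
        simp only [hb]
        simp only [fstar]
        have hexpD : ∀ r, Real.exp (-φ * (CD t' w r - (∑ j', (δ r j' : ℝ) * p (t', j')) -
            PiD φ CD0 CD δ t' w p)) =
            Real.exp (-φ * (CD t' w r - ∑ j', (δ r j' : ℝ) * p (t', j'))) /
              (Real.exp (-φ * CD0 t' w) +
                ∑ r', Real.exp (-φ * (CD t' w r' - ∑ j', (δ r' j' : ℝ) * p (t', j')))) := by
          intro r
          rw [show -φ * (CD t' w r - (∑ j', (δ r j' : ℝ) * p (t', j')) - PiD φ CD0 CD δ t' w p)
              = -φ * (CD t' w r - ∑ j', (δ r j' : ℝ) * p (t', j')) + φ * PiD φ CD0 CD δ t' w p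
            from by ring, Real.exp_add]
          have hlogS : φ * PiD φ CD0 CD δ t' w p = -Real.log (Real.exp (-φ * CD0 t' w) +
              ∑ r', Real.exp (-φ * (CD t' w r' - ∑ j', (δ r' j' : ℝ) * p (t', j')))) := by
            simp only [PiD]; field_simp
          rw [hlogS, Real.exp_neg, Real.exp_log (hDpos t' w p), div_eq_mul_inv]
        simp only [hexpD]
        rw [Finset.sum_div, Finset.mul_sum, ← Finset.sum_neg_distrib]
        exact Finset.sum_congr rfl fun r _ => by ring
      · simp only [if_neg ht']
        have hconst : (fun z => ∑ w, ND t' w * PiD φ CD0 CD δ t' w (Function.update p (t, j) z))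
            = fun _ => ∑ w, ND t' w * PiD φ CD0 CD δ t' w p := by
          funext z
          have hupd : ∀ (j' : J),
              Function.update p (t, j) z (t', j') = p (t', j') := fun j' =>
            Function.update_of_ne (by simp [Prod.ext_iff, ht']) _ _
          refine Finset.sum_congr rfl fun w _ => ?_
          simp only [PiD, hupd]
        rw [hconst]
        exact hasDerivAt_const _ _
    have hcomb := part1.add part2
    refine hcomb.congr_deriv (Eq.symm ?_)
    try ring
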